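/- Negative-binomial limit of the sampling probability under strong negative selection proportional to the sample size (equation (9a) of the paper): fix θ₁, θ₂ > 0, a natural number n₁, and β̃ < 0. For each natural number n₂, set n = n₁ + n₂, β = β̃·n₂, and define q(n₁,n₂;β) := C(n,n₁) · I(n₁,n₂,β) / I(0,0,β), where C(n,n₁) is the binomial coefficient and I(m₁,m₂,β) := ∫₀¹ x^{θ₁+m₁-1}(1-x)^{θ₂+m₂-1} e^{βx} dx. Then lim_{n₂ → ∞} q(n₁,n₂;β̃n₂) = (Γ(θ₁+n₁)/(n₁!·Γ(θ₁))) · (1/(1+|β̃|))^{n₁} · (|β̃|/(1+|β̃|))^{θ₁}. -/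

import Mathlib

open Real Filter Topology

open MeasureTheory Set intervalIntegral in
private lemma aux_rpow_le_max {x : ℝ} (p : ℝ) (hx0 : 1/2 ≤ x) (hx1 : x ≤ 1) :
    x ^ p ≤ max 1 ((1/2:ℝ) ^ p) := by
  rcases le_or_gt 0 p with hp | hp
  · exact le_max_of_le_left (Real.rpow_le_one (by linarith) hx1 hp)
  · exact le_max_of_le_right (Real.rpow_le_rpow_of_nonpos (by norm_num) hx0 hp.le)

open MeasureTheory Set intervalIntegral in
private lemma beta_integrable (s t b : ℝ) (hs : 0 < s) (ht : 0 < t) :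
    IntervalIntegrable (fun x : ℝ => x ^ (s-1) * (1-x) ^ (t-1) * Real.exp (b*x))
      volume 0 (1:ℝ) := by
  have hmeas : Measurable fun x : ℝ => x ^ (s-1) * (1-x) ^ (t-1) * Real.exp (b*x) :=
    ((measurable_id.pow measurable_const).mul
      ((measurable_const.sub measurable_id).pow measurable_const)).mul
      ((measurable_id.const_mul b).exp)
  have key : ∀ x : ℝ, 0 < x → x ≤ 1 → Real.exp (b*x) ≤ Real.exp |b| := by
    intro x hx0 hx1
    apply Real.exp_le_exp.2
    calc b * x ≤ |b * x| := le_abs_self _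
      _ = |b| * |x| := abs_mul _ _
      _ ≤ |b| * 1 := by
          refine mul_le_mul_of_nonneg_left ?_ (abs_nonneg b)
          rw [abs_of_pos hx0]; exact hx1
      _ = |b| := mul_one _
  have h1 : IntervalIntegrable (fun x : ℝ => x ^ (s-1) * (1-x) ^ (t-1) * Real.exp (b*x))
      volume 0 (1/2) := by
    refine IntervalIntegrable.mono_fun'
      (g := fun x => (max 1 ((1/2:ℝ) ^ (t-1)) * Real.exp |b|) * x ^ (s-1)) ?_
      hmeas.aestronglyMeasurable ?_
    · exact (intervalIntegrable_rpow' (by linarith)).const_mul _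
    · rw [uIoc_of_le (by norm_num : (0:ℝ) ≤ 1/2)]
      refine (ae_restrict_iff' measurableSet_Ioc).2 (Eventually.of_forall ?_)
      rintro x ⟨hx0, hx1⟩
      have h2 : (1-x) ^ (t-1) ≤ max 1 ((1/2:ℝ) ^ (t-1)) :=
        aux_rpow_le_max _ (by linarith) (by linarith)
      have h3 : Real.exp (b*x) ≤ Real.exp |b| := key x hx0 (by linarith)
      have hxp : 0 ≤ x ^ (s-1) := Real.rpow_nonneg hx0.le _
      have h1p : 0 ≤ (1-x) ^ (t-1) := Real.rpow_nonneg (by linarith) _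
      have hM : 0 ≤ max 1 ((1/2:ℝ) ^ (t-1)) := le_trans zero_le_one (le_max_left _ _)
      simp only [Real.norm_eq_abs]
      rw [abs_of_nonneg (mul_nonneg (mul_nonneg hxp h1p) (Real.exp_pos _).le)]
      calc x ^ (s-1) * (1-x) ^ (t-1) * Real.exp (b*x)
          ≤ x ^ (s-1) * max 1 ((1/2:ℝ) ^ (t-1)) * Real.exp |b| :=
            mul_le_mul (mul_le_mul_of_nonneg_left h2 hxp) h3 (Real.exp_pos _).le
              (mul_nonneg hxp hM)
        _ = (max 1 ((1/2:ℝ) ^ (t-1)) * Real.exp |b|) * x ^ (s-1) := by ring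
  have h2 : IntervalIntegrable (fun x : ℝ => x ^ (s-1) * (1-x) ^ (t-1) * Real.exp (b*x))
      volume (1/2) 1 := by
    refine IntervalIntegrable.mono_fun'
      (g := fun x => (max 1 ((1/2:ℝ) ^ (s-1)) * Real.exp |b|) * (1-x) ^ (t-1)) ?_
      hmeas.aestronglyMeasurable ?_
    · have := ((intervalIntegrable_rpow' (r := t-1) (a := 0) (b := 1/2)
        (by linarith)).comp_sub_left 1)
      norm_num at this
      exact (this.symm.const_mul _)
    · rw [uIoc_of_le (by norm_num : (1/2:ℝ) ≤ 1)]
      refine (ae_restrict_iff' measurableSet_Ioc).2 (Eventually.of_forall ?_)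
      rintro x ⟨hx0, hx1⟩
      have h2 : x ^ (s-1) ≤ max 1 ((1/2:ℝ) ^ (s-1)) := aux_rpow_le_max _ hx0.le hx1
      have h3 : Real.exp (b*x) ≤ Real.exp |b| := key x (by linarith) hx1
      have hxp : 0 ≤ x ^ (s-1) := Real.rpow_nonneg (by linarith) _
      have h1p : 0 ≤ (1-x) ^ (t-1) := Real.rpow_nonneg (by linarith) _
      have hM : 0 ≤ max 1 ((1/2:ℝ) ^ (s-1)) := le_trans zero_le_one (le_max_left _ _)
      simp only [Real.norm_eq_abs]
      rw [abs_of_nonneg (mul_nonneg (mul_nonneg hxp h1p) (Real.exp_pos _).le)]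
      calc x ^ (s-1) * (1-x) ^ (t-1) * Real.exp (b*x)
          ≤ max 1 ((1/2:ℝ) ^ (s-1)) * (1-x) ^ (t-1) * Real.exp |b| :=
            mul_le_mul (mul_le_mul_of_nonneg_right h2 h1p) h3 (Real.exp_pos _).le
              (mul_nonneg hM h1p)
        _ = (max 1 ((1/2:ℝ) ^ (s-1)) * Real.exp |b|) * (1-x) ^ (t-1) := by ring
  exact h1.trans h2

private lemma tendsto_base_pow (t : ℝ) {y : ℝ} (hy : 0 < y) :
    Filter.Tendsto (fun n : ℕ => (1 - y / n) ^ (t + n - 1)) Filter.atTop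
      (𝓝 (Real.exp (-y))) := by
  have hbase : Filter.Tendsto (fun n : ℕ => 1 - y/(n:ℝ)) atTop (𝓝 1) := by
    have h := tendsto_const_div_atTop_nhds_zero_nat y
    have := tendsto_const_nhds (x := (1:ℝ)) (f := atTop (α := ℕ)) |>.sub h
    simpa using this
  have hlog : Filter.Tendsto (fun n : ℕ => (n:ℝ) * Real.log (1 - y/n)) atTop (𝓝 (-y)) := by
    have := (Real.tendsto_mul_log_one_add_div_atTop (-y)).comp tendsto_natCast_atTop_atTop
    refine this.congr fun n => ?_
    simp [Function.comp, sub_eq_add_neg, neg_div]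
  have hlog0 : Filter.Tendsto (fun n : ℕ => Real.log (1 - y/n)) atTop (𝓝 0) := by
    have := (Real.continuousAt_log one_ne_zero).tendsto.comp hbase
    simpa [Function.comp_def] using this
  have hexp : Filter.Tendsto (fun n : ℕ => (t + n - 1) * Real.log (1 - y/n)) atTop (𝓝 (-y)) := by
    have h2 : Filter.Tendsto (fun n : ℕ => (t - 1) * Real.log (1 - y/n)) atTop (𝓝 0) := by
      simpa using hlog0.const_mul (t-1)
    have h3 := hlog.add h2
    rw [add_zero] at h3
    refine h3.congr fun n => ?_
    ring
  have hfin := (Real.continuous_exp.tendsto _).comp hexp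
  refine Filter.Tendsto.congr' ?_ hfin
  filter_upwards [Filter.eventually_gt_atTop (Nat.ceil y)] with n hn
  have hyn : y < n := lt_of_le_of_lt (Nat.le_ceil y) (by exact_mod_cast hn)
  have hn0 : (0:ℝ) < n := lt_trans hy hyn
  have hb : 0 < 1 - y/n := by
    rw [sub_pos, div_lt_one hn0]; exact hyn
  rw [Function.comp_apply, Real.rpow_def_of_pos hb, mul_comm]

open MeasureTheory Set in
private lemma limA (s θ₂ b : ℝ) (hs : 0 < s) (hθ₂ : 0 < θ₂) (hb : b < 0) :
    Filter.Tendsto (fun n : ℕ => (n:ℝ) ^ s *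
        ∫ x in (0:ℝ)..1, x ^ (s-1) * (1-x) ^ (θ₂ + n - 1) * Real.exp (b * n * x))
      Filter.atTop (𝓝 ((1/(1-b)) ^ s * Real.Gamma s)) := by
  set F : ℕ → ℝ → ℝ := fun n y =>
    Set.indicator (Set.Ioc (0:ℝ) (n:ℝ))
      (fun y => y ^ (s-1) * (1 - y/(n:ℝ)) ^ (θ₂ + n - 1) * Real.exp (b * y)) y with hF
  have key : ∀ n : ℕ, 1 ≤ n → (n:ℝ) ^ s *
      (∫ x in (0:ℝ)..1, x ^ (s-1) * (1-x) ^ (θ₂ + n - 1) * Real.exp (b * n * x))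
      = ∫ y in Set.Ioi (0:ℝ), F n y := by
    intro n hn
    have hn0 : (0:ℝ) < n := by exact_mod_cast hn
    have hnne : (n:ℝ) ≠ 0 := hn0.ne'
    have hsub : (∫ y in (0:ℝ)..(n:ℝ),
        ((y/(n:ℝ)) ^ (s-1) * (1-(y/(n:ℝ))) ^ (θ₂ + n - 1) * Real.exp (b * n * (y/(n:ℝ)))))
        = (n:ℝ) * ∫ x in (0:ℝ)..1, x ^ (s-1) * (1-x) ^ (θ₂ + n - 1) * Real.exp (b * n * x) := by
      rw [intervalIntegral.integral_comp_div
        (f := fun x => x ^ (s-1) * (1-x) ^ (θ₂ + n - 1) * Real.exp (b * n * x)) hnne]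
      rw [zero_div, div_self hnne, smul_eq_mul]
    have hrw : (n:ℝ) ^ s *
        (∫ x in (0:ℝ)..1, x ^ (s-1) * (1-x) ^ (θ₂ + n - 1) * Real.exp (b * n * x))
        = (n:ℝ) ^ (s-1) * ∫ y in (0:ℝ)..(n:ℝ),
          ((y/(n:ℝ)) ^ (s-1) * (1-(y/(n:ℝ))) ^ (θ₂ + n - 1) * Real.exp (b * n * (y/(n:ℝ)))) := by
      have hpow : (n:ℝ)^s = (n:ℝ)^(s-1) * (n:ℝ) := by
        rw [show s = (s-1)+1 by ring]
        rw [Real.rpow_add hn0, Real.rpow_one]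
        norm_num
      rw [hsub, hpow, mul_assoc]
    rw [hrw, intervalIntegral.integral_of_le hn0.le, ← MeasureTheory.integral_const_mul]
    rw [MeasureTheory.setIntegral_indicator measurableSet_Ioc,
      Set.inter_eq_self_of_subset_right Set.Ioc_subset_Ioi_self]
    refine MeasureTheory.setIntegral_congr_fun measurableSet_Ioc ?_
    rintro y ⟨hy0, hyn⟩
    have e1 : b*(n:ℝ)*(y/(n:ℝ)) = b*y := by field_simp
    have e2 : (y/(n:ℝ)) ^ (s-1) = y ^ (s-1) / (n:ℝ) ^ (s-1) :=
      Real.div_rpow hy0.le hn0.le _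
    have hns : (n:ℝ) ^ (s-1) ≠ 0 := (Real.rpow_pos_of_pos hn0 _).ne'
    dsimp only
    rw [e1, e2]
    field_simp
  have hmeas : ∀ n : ℕ, AEStronglyMeasurable (F n) (volume.restrict (Set.Ioi (0:ℝ))) := by
    intro n
    refine (Measurable.indicator ?_ measurableSet_Ioc).aestronglyMeasurable
    exact ((measurable_id.pow measurable_const).mul
      ((measurable_const.sub (measurable_id.div_const _)).pow measurable_const)).mul
      ((measurable_id.const_mul b).exp)
  have hbound_int : Integrable (fun y : ℝ => y ^ (s-1) * Real.exp (b*y))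
      (volume.restrict (Set.Ioi (0:ℝ))) := by
    have h := integrableOn_rpow_mul_exp_neg_mul_rpow
      (by linarith : (-1:ℝ) < s-1) zero_lt_one (by linarith : (0:ℝ) < -b)
    simpa [Real.rpow_one, IntegrableOn] using h
  have h_bound : ∀ n : ℕ, ∀ᵐ y ∂(volume.restrict (Set.Ioi (0:ℝ))),
      ‖F n y‖ ≤ y ^ (s-1) * Real.exp (b*y) := by
    intro n
    refine (ae_restrict_iff' measurableSet_Ioi).2 (Filter.Eventually.of_forall fun y hy => ?_)
    have hy0 : (0:ℝ) < y := hy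
    by_cases hyn : y ∈ Set.Ioc (0:ℝ) (n:ℝ)
    · rw [hF]
      simp only [Set.indicator_of_mem hyn]
      have hn0 : (0:ℝ) < n := lt_of_lt_of_le hy0 hyn.2
      have h01 : 0 ≤ 1 - y / n := by
        have : y / (n:ℝ) ≤ 1 := (div_le_one hn0).2 hyn.2
        linarith
      have hn1 : (1:ℝ) ≤ n := by exact_mod_cast Nat.one_le_cast.mpr (Nat.cast_pos.mp hn0)
      have hexp : 0 ≤ θ₂ + (n:ℝ) - 1 := by linarith
      have hdiv : 0 ≤ y / (n:ℝ) := div_nonneg hy0.le hn0.le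
      have hle1 : (1 - y/(n:ℝ)) ^ (θ₂ + n - 1) ≤ 1 :=
        Real.rpow_le_one h01 (by linarith) hexp
      have hynn : 0 ≤ y ^ (s-1) := Real.rpow_nonneg hy0.le _
      have hq : 0 ≤ (1 - y/(n:ℝ)) ^ (θ₂ + n - 1) := Real.rpow_nonneg h01 _
      simp only [Real.norm_eq_abs]
      rw [abs_of_nonneg (mul_nonneg (mul_nonneg hynn hq) (Real.exp_pos _).le)]
      calc y ^ (s-1) * (1 - y/(n:ℝ)) ^ (θ₂ + n - 1) * Real.exp (b*y)
          ≤ y ^ (s-1) * 1 * Real.exp (b*y) :=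
            mul_le_mul_of_nonneg_right (mul_le_mul_of_nonneg_left hle1 hynn)
              (Real.exp_pos _).le
        _ = y ^ (s-1) * Real.exp (b*y) := by ring
    · rw [hF]
      simp only [Set.indicator_of_notMem hyn, norm_zero]
      exact mul_nonneg (Real.rpow_nonneg hy0.le _) (Real.exp_pos _).le
  have h_lim : ∀ᵐ y ∂(volume.restrict (Set.Ioi (0:ℝ))),
      Filter.Tendsto (fun n : ℕ => F n y) Filter.atTop
        (𝓝 (y ^ (s-1) * Real.exp ((b-1)*y))) := by
    refine (ae_restrict_iff' measurableSet_Ioi).2 (Filter.Eventually.of_forall fun y hy => ?_)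
    have hy0 : (0:ℝ) < y := hy
    have htd := ((tendsto_base_pow θ₂ hy0).const_mul (y ^ (s-1))).mul_const (Real.exp (b*y))
    have hval : y ^ (s-1) * Real.exp (-y) * Real.exp (b*y)
        = y ^ (s-1) * Real.exp ((b-1)*y) := by
      rw [mul_assoc, ← Real.exp_add, show -y + b*y = (b-1)*y by ring]
    rw [hval] at htd
    refine Filter.Tendsto.congr' ?_ htd
    filter_upwards [Filter.eventually_ge_atTop (Nat.ceil y)] with n hn
    have hyn : y ≤ (n:ℝ) := le_trans (Nat.le_ceil y) (by exact_mod_cast hn)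
    rw [hF]
    simp only [Set.indicator_of_mem (Set.mem_Ioc.mpr ⟨hy0, hyn⟩)]
  have hDCT := MeasureTheory.tendsto_integral_of_dominated_convergence
    (fun y : ℝ => y ^ (s-1) * Real.exp (b*y)) hmeas hbound_int h_bound h_lim
  have hval : (∫ y in Set.Ioi (0:ℝ), y ^ (s-1) * Real.exp ((b-1)*y))
      = (1/(1-b)) ^ s * Real.Gamma s := by
    rw [← Real.integral_rpow_mul_exp_neg_mul_Ioi hs (by linarith : (0:ℝ) < 1-b)]
    refine MeasureTheory.setIntegral_congr_fun measurableSet_Ioi fun y hy => ?_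
    congr 1
    ring
  rw [hval] at hDCT
  refine Filter.Tendsto.congr' ?_ hDCT
  filter_upwards [Filter.eventually_ge_atTop 1] with n hn
  exact (key n hn).symm

open MeasureTheory Set in
private lemma limB1 (s t b : ℝ) (hs : 0 < s) (ht : 0 < t) (hb : b < 0) :
    Filter.Tendsto (fun n : ℕ => (n:ℝ) ^ s *
        ∫ x in (0:ℝ)..(1/2), x ^ (s-1) * (1-x) ^ (t - 1) * Real.exp (b * n * x))
      Filter.atTop (𝓝 ((1/(-b)) ^ s * Real.Gamma s)) := by
  set M : ℝ := max 1 ((1/2:ℝ) ^ (t-1)) with hM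
  have hM0 : 0 ≤ M := le_trans zero_le_one (le_max_left _ _)
  set F : ℕ → ℝ → ℝ := fun n y =>
    Set.indicator (Set.Ioc (0:ℝ) ((n:ℝ)/2))
      (fun y => y ^ (s-1) * (1 - y/(n:ℝ)) ^ (t - 1) * Real.exp (b * y)) y with hF
  have key : ∀ n : ℕ, 1 ≤ n → (n:ℝ) ^ s *
      (∫ x in (0:ℝ)..(1/2), x ^ (s-1) * (1-x) ^ (t - 1) * Real.exp (b * n * x))
      = ∫ y in Set.Ioi (0:ℝ), F n y := by
    intro n hn
    have hn0 : (0:ℝ) < n := by exact_mod_cast hn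
    have hnne : (n:ℝ) ≠ 0 := hn0.ne'
    have hsub : (∫ y in (0:ℝ)..((n:ℝ)/2),
        ((y/(n:ℝ)) ^ (s-1) * (1-(y/(n:ℝ))) ^ (t - 1) * Real.exp (b * n * (y/(n:ℝ)))))
        = (n:ℝ) * ∫ x in (0:ℝ)..(1/2), x ^ (s-1) * (1-x) ^ (t - 1) * Real.exp (b * n * x) := by
      rw [intervalIntegral.integral_comp_div
        (f := fun x => x ^ (s-1) * (1-x) ^ (t - 1) * Real.exp (b * n * x)) hnne]
      rw [zero_div, smul_eq_mul, show (n:ℝ)/2/(n:ℝ) = 1/2 by field_simp]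
    have hrw : (n:ℝ) ^ s *
        (∫ x in (0:ℝ)..(1/2), x ^ (s-1) * (1-x) ^ (t - 1) * Real.exp (b * n * x))
        = (n:ℝ) ^ (s-1) * ∫ y in (0:ℝ)..((n:ℝ)/2),
          ((y/(n:ℝ)) ^ (s-1) * (1-(y/(n:ℝ))) ^ (t - 1) * Real.exp (b * n * (y/(n:ℝ)))) := by
      have hpow : (n:ℝ)^s = (n:ℝ)^(s-1) * (n:ℝ) := by
        rw [show s = (s-1)+1 by ring]
        rw [Real.rpow_add hn0, Real.rpow_one]
        norm_num
      rw [hsub, hpow, mul_assoc]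
    rw [hrw, intervalIntegral.integral_of_le (by positivity : (0:ℝ) ≤ (n:ℝ)/2),
      ← MeasureTheory.integral_const_mul]
    rw [MeasureTheory.setIntegral_indicator measurableSet_Ioc,
      Set.inter_eq_self_of_subset_right Set.Ioc_subset_Ioi_self]
    refine MeasureTheory.setIntegral_congr_fun measurableSet_Ioc ?_
    rintro y ⟨hy0, hyn⟩
    have e1 : b*(n:ℝ)*(y/(n:ℝ)) = b*y := by field_simp
    have e2 : (y/(n:ℝ)) ^ (s-1) = y ^ (s-1) / (n:ℝ) ^ (s-1) :=
      Real.div_rpow hy0.le hn0.le _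
    have hns : (n:ℝ) ^ (s-1) ≠ 0 := (Real.rpow_pos_of_pos hn0 _).ne'
    dsimp only
    rw [e1, e2]
    field_simp
  have hmeas : ∀ n : ℕ, AEStronglyMeasurable (F n) (volume.restrict (Set.Ioi (0:ℝ))) := by
    intro n
    refine (Measurable.indicator ?_ measurableSet_Ioc).aestronglyMeasurable
    exact ((measurable_id.pow measurable_const).mul
      ((measurable_const.sub (measurable_id.div_const _)).pow measurable_const)).mul
      ((measurable_id.const_mul b).exp)
  have hbound_int : Integrable (fun y : ℝ => M * (y ^ (s-1) * Real.exp (b*y)))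
      (volume.restrict (Set.Ioi (0:ℝ))) := by
    have h := integrableOn_rpow_mul_exp_neg_mul_rpow
      (by linarith : (-1:ℝ) < s-1) zero_lt_one (by linarith : (0:ℝ) < -b)
    have h2 : IntegrableOn (fun y : ℝ => y ^ (s-1) * Real.exp (b*y)) (Set.Ioi (0:ℝ)) := by
      simpa [Real.rpow_one] using h
    exact h2.const_mul M
  have h_bound : ∀ n : ℕ, ∀ᵐ y ∂(volume.restrict (Set.Ioi (0:ℝ))),
      ‖F n y‖ ≤ M * (y ^ (s-1) * Real.exp (b*y)) := by
    intro n
    refine (ae_restrict_iff' measurableSet_Ioi).2 (Filter.Eventually.of_forall fun y hy => ?_)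
    have hy0 : (0:ℝ) < y := hy
    by_cases hyn : y ∈ Set.Ioc (0:ℝ) ((n:ℝ)/2)
    · rw [hF]
      simp only [Set.indicator_of_mem hyn]
      have hn0 : (0:ℝ) < n := by
        have := hyn.2; nlinarith [hy0]
      have hd2 : y / (n:ℝ) ≤ 1/2 := by
        rw [div_le_div_iff₀ hn0 (by norm_num : (0:ℝ) < 2)]
        nlinarith [hyn.2]
      have hdiv : 0 ≤ y / (n:ℝ) := div_nonneg hy0.le hn0.le
      have hle1 : (1 - y/(n:ℝ)) ^ (t - 1) ≤ M :=
        aux_rpow_le_max _ (by linarith) (by linarith)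
      have hynn : 0 ≤ y ^ (s-1) := Real.rpow_nonneg hy0.le _
      have hq : 0 ≤ (1 - y/(n:ℝ)) ^ (t - 1) := Real.rpow_nonneg (by linarith) _
      simp only [Real.norm_eq_abs]
      rw [abs_of_nonneg (mul_nonneg (mul_nonneg hynn hq) (Real.exp_pos _).le)]
      calc y ^ (s-1) * (1 - y/(n:ℝ)) ^ (t - 1) * Real.exp (b*y)
          ≤ y ^ (s-1) * M * Real.exp (b*y) :=
            mul_le_mul_of_nonneg_right (mul_le_mul_of_nonneg_left hle1 hynn)
              (Real.exp_pos _).le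
        _ = M * (y ^ (s-1) * Real.exp (b*y)) := by ring
    · rw [hF]
      simp only [Set.indicator_of_notMem hyn, norm_zero]
      exact mul_nonneg hM0 (mul_nonneg (Real.rpow_nonneg hy0.le _) (Real.exp_pos _).le)
  have h_lim : ∀ᵐ y ∂(volume.restrict (Set.Ioi (0:ℝ))),
      Filter.Tendsto (fun n : ℕ => F n y) Filter.atTop
        (𝓝 (y ^ (s-1) * Real.exp (b*y))) := by
    refine (ae_restrict_iff' measurableSet_Ioi).2 (Filter.Eventually.of_forall fun y hy => ?_)
    have hy0 : (0:ℝ) < y := hy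
    have hbase : Filter.Tendsto (fun n : ℕ => 1 - y/(n:ℝ)) Filter.atTop (𝓝 1) := by
      have h := tendsto_const_div_atTop_nhds_zero_nat y
      have := tendsto_const_nhds (x := (1:ℝ)) (f := Filter.atTop (α := ℕ)) |>.sub h
      simpa using this
    have hpow1 : Filter.Tendsto (fun n : ℕ => (1 - y/(n:ℝ)) ^ (t-1)) Filter.atTop (𝓝 1) := by
      have := ((Real.continuousAt_rpow_const 1 (t-1) (Or.inl one_ne_zero)).tendsto).comp hbase
      simpa [Real.one_rpow, Function.comp_def] using this
    have htd := ((hpow1.const_mul (y ^ (s-1))).mul_const (Real.exp (b*y)))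
    rw [mul_one] at htd
    refine Filter.Tendsto.congr' ?_ htd
    filter_upwards [Filter.eventually_ge_atTop (Nat.ceil (2*y))] with n hn
    have hyn : 2*y ≤ (n:ℝ) := le_trans (Nat.le_ceil _) (by exact_mod_cast hn)
    have hmem : y ∈ Set.Ioc (0:ℝ) ((n:ℝ)/2) := ⟨hy0, by linarith⟩
    rw [hF]
    simp only [Set.indicator_of_mem hmem]
  have hDCT := MeasureTheory.tendsto_integral_of_dominated_convergence
    (fun y : ℝ => M * (y ^ (s-1) * Real.exp (b*y))) hmeas hbound_int h_bound h_lim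
  have hval : (∫ y in Set.Ioi (0:ℝ), y ^ (s-1) * Real.exp (b*y))
      = (1/(-b)) ^ s * Real.Gamma s := by
    rw [← Real.integral_rpow_mul_exp_neg_mul_Ioi hs (by linarith : (0:ℝ) < -b)]
    refine MeasureTheory.setIntegral_congr_fun measurableSet_Ioi fun y hy => ?_
    congr 1
    ring
  rw [hval] at hDCT
  refine Filter.Tendsto.congr' ?_ hDCT
  filter_upwards [Filter.eventually_ge_atTop 1] with n hn
  exact (key n hn).symm

open MeasureTheory Set in
private lemma limB2 (s t b : ℝ) (hs : 0 < s) (ht : 0 < t) (hb : b < 0) :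
    Filter.Tendsto (fun n : ℕ => (n:ℝ) ^ s *
        ∫ x in (1/2:ℝ)..1, x ^ (s-1) * (1-x) ^ (t - 1) * Real.exp (b * n * x))
      Filter.atTop (𝓝 0) := by
  have hsub : Set.uIcc (1/2:ℝ) 1 ⊆ Set.uIcc (0:ℝ) 1 := by
    rw [Set.uIcc_of_le (by norm_num : (1/2:ℝ) ≤ 1), Set.uIcc_of_le (by norm_num : (0:ℝ) ≤ 1)]
    exact Set.Icc_subset_Icc (by norm_num) le_rfl
  have hK0 : IntervalIntegrable (fun x : ℝ => x ^ (s-1) * (1-x) ^ (t-1)) volume 0 1 := by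
    have := beta_integrable s t 0 hs ht
    simpa using this
  set K := ∫ x in (1/2:ℝ)..1, x ^ (s-1) * (1-x) ^ (t-1) with hKdef
  have hup : ∀ n : ℕ, (∫ x in (1/2:ℝ)..1, x ^ (s-1) * (1-x) ^ (t - 1) * Real.exp (b * n * x))
      ≤ Real.exp (b * n * (1/2)) * K := by
    intro n
    have hint1 : IntervalIntegrable
        (fun x : ℝ => x ^ (s-1) * (1-x) ^ (t-1) * Real.exp (b * n * x)) volume (1/2) 1 :=
      (beta_integrable s t (b*n) hs ht).mono_set hsub
    have hint2 : IntervalIntegrable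
        (fun x : ℝ => Real.exp (b * n * (1/2)) * (x ^ (s-1) * (1-x) ^ (t-1))) volume (1/2) 1 :=
      (hK0.mono_set hsub).const_mul _
    have hmono := intervalIntegral.integral_mono_on (by norm_num : (1/2:ℝ) ≤ 1) hint1 hint2 ?_
    · rw [intervalIntegral.integral_const_mul] at hmono
      exact hmono
    · rintro x ⟨hx0, hx1⟩
      have hexp : Real.exp (b * n * x) ≤ Real.exp (b * n * (1/2)) := by
        apply Real.exp_le_exp.2
        have hbn : b * (n:ℝ) ≤ 0 := mul_nonpos_of_nonpos_of_nonneg hb.le (Nat.cast_nonneg n)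
        exact mul_le_mul_of_nonpos_left hx0 hbn
      have hxp : 0 ≤ x ^ (s-1) := Real.rpow_nonneg (by linarith) _
      have h1p : 0 ≤ (1-x) ^ (t-1) := Real.rpow_nonneg (by linarith) _
      calc x ^ (s-1) * (1-x) ^ (t-1) * Real.exp (b * n * x)
          ≤ x ^ (s-1) * (1-x) ^ (t-1) * Real.exp (b * n * (1/2)) :=
            mul_le_mul_of_nonneg_left hexp (mul_nonneg hxp h1p)
        _ = Real.exp (b * n * (1/2)) * (x ^ (s-1) * (1-x) ^ (t-1)) := by ring
  have hlo : ∀ n : ℕ, 0 ≤ ∫ x in (1/2:ℝ)..1, x ^ (s-1) * (1-x) ^ (t - 1) * Real.exp (b * n * x) := by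
    intro n
    apply intervalIntegral.integral_nonneg (by norm_num : (1/2:ℝ) ≤ 1)
    rintro x ⟨hx0, hx1⟩
    have hxp : 0 ≤ x ^ (s-1) := Real.rpow_nonneg (by linarith) _
    have h1p : 0 ≤ (1-x) ^ (t-1) := Real.rpow_nonneg (by linarith) _
    exact mul_nonneg (mul_nonneg hxp h1p) (Real.exp_pos _).le
  have h0 : Filter.Tendsto (fun n : ℕ => ((n:ℝ) ^ s * Real.exp (b * n * (1/2))) * K)
      Filter.atTop (𝓝 0) := by
    have h := (tendsto_rpow_mul_exp_neg_mul_atTop_nhds_zero s (-(b/2))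
      (by linarith)).comp tendsto_natCast_atTop_atTop
    have h2 : Filter.Tendsto (fun n : ℕ => (n:ℝ) ^ s * Real.exp (b * n * (1/2)))
        Filter.atTop (𝓝 0) := by
      refine h.congr fun n => ?_
      simp only [Function.comp_apply]
      rw [show b * (n:ℝ) * (1/2) = -(-(b/2)) * (n:ℝ) by ring]
    simpa using h2.mul_const K
  refine tendsto_of_tendsto_of_tendsto_of_le_of_le tendsto_const_nhds h0 ?_ ?_
  · intro n
    exact mul_nonneg (Real.rpow_nonneg (Nat.cast_nonneg n) _) (hlo n)
  · intro n
    have := mul_le_mul_of_nonneg_left (hup n) (Real.rpow_nonneg (Nat.cast_nonneg n) s)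
    calc (n:ℝ) ^ s * ∫ x in (1/2:ℝ)..1, x ^ (s-1) * (1-x) ^ (t - 1) * Real.exp (b * n * x)
        ≤ (n:ℝ) ^ s * (Real.exp (b * n * (1/2)) * K) := this
      _ = ((n:ℝ) ^ s * Real.exp (b * n * (1/2))) * K := by ring

open MeasureTheory Set in
private lemma limB (s t b : ℝ) (hs : 0 < s) (ht : 0 < t) (hb : b < 0) :
    Filter.Tendsto (fun n : ℕ => (n:ℝ) ^ s *
        ∫ x in (0:ℝ)..1, x ^ (s-1) * (1-x) ^ (t - 1) * Real.exp (b * n * x))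
      Filter.atTop (𝓝 ((1/(-b)) ^ s * Real.Gamma s)) := by
  have hsub1 : Set.uIcc (0:ℝ) (1/2) ⊆ Set.uIcc (0:ℝ) 1 := by
    rw [Set.uIcc_of_le (by norm_num : (0:ℝ) ≤ 1/2), Set.uIcc_of_le (by norm_num : (0:ℝ) ≤ 1)]
    exact Set.Icc_subset_Icc le_rfl (by norm_num)
  have hsub2 : Set.uIcc (1/2:ℝ) 1 ⊆ Set.uIcc (0:ℝ) 1 := by
    rw [Set.uIcc_of_le (by norm_num : (1/2:ℝ) ≤ 1), Set.uIcc_of_le (by norm_num : (0:ℝ) ≤ 1)]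
    exact Set.Icc_subset_Icc (by norm_num) le_rfl
  have hsplit : ∀ n : ℕ,
      (∫ x in (0:ℝ)..1, x ^ (s-1) * (1-x) ^ (t - 1) * Real.exp (b * n * x))
      = (∫ x in (0:ℝ)..(1/2), x ^ (s-1) * (1-x) ^ (t - 1) * Real.exp (b * n * x))
        + ∫ x in (1/2:ℝ)..1, x ^ (s-1) * (1-x) ^ (t - 1) * Real.exp (b * n * x) := by
    intro n
    exact (intervalIntegral.integral_add_adjacent_intervals
      ((beta_integrable s t (b*n) hs ht).mono_set hsub1)
      ((beta_integrable s t (b*n) hs ht).mono_set hsub2)).symm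
  have h := (limB1 s t b hs ht hb).add (limB2 s t b hs ht hb)
  rw [add_zero] at h
  refine h.congr fun n => ?_
  rw [hsplit n]
  ring

private lemma limC (n₁ : ℕ) :
    Filter.Tendsto (fun n₂ : ℕ => (Nat.choose (n₁+n₂) n₁ : ℝ) / (n₂:ℝ) ^ (n₁:ℕ))
      Filter.atTop (𝓝 (1 / (Nat.factorial n₁ : ℝ))) := by
  have hfac : (0:ℝ) < (Nat.factorial n₁ : ℝ) := by exact_mod_cast Nat.factorial_pos n₁
  have hprod : Filter.Tendsto
      (fun n₂ : ℕ => ∏ i ∈ Finset.range n₁, (((n₁ + n₂ - i : ℕ) : ℝ) / (n₂:ℝ)))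
      Filter.atTop (𝓝 1) := by
    have h1 : ∀ i ∈ Finset.range n₁, Filter.Tendsto
        (fun n₂ : ℕ => ((n₁ + n₂ - i : ℕ) : ℝ) / (n₂:ℝ)) Filter.atTop (𝓝 1) := by
      intro i hi
      have hile : i ≤ n₁ := (Finset.mem_range.mp hi).le
      have heq : ∀ n₂ : ℕ, 1 ≤ n₂ → ((n₁ + n₂ - i : ℕ) : ℝ) / (n₂:ℝ)
          = ((n₁ - i : ℕ) : ℝ) / (n₂:ℝ) + 1 := by
        intro n₂ hn₂
        have hn0 : (n₂:ℝ) ≠ 0 := by positivity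
        have : (n₁ + n₂ - i : ℕ) = (n₁ - i) + n₂ := by omega
        rw [this, Nat.cast_add]
        field_simp
      have hlim : Filter.Tendsto (fun n₂ : ℕ => ((n₁ - i : ℕ) : ℝ) / (n₂:ℝ) + 1)
          Filter.atTop (𝓝 1) := by
        have := (tendsto_const_div_atTop_nhds_zero_nat ((n₁ - i : ℕ) : ℝ)).add_const 1
        simpa using this
      refine Filter.Tendsto.congr' ?_ hlim
      filter_upwards [Filter.eventually_ge_atTop 1] with n₂ hn₂
      exact (heq n₂ hn₂).symm
    have := tendsto_finset_prod (Finset.range n₁)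
      (fun i hi => h1 i hi)
    simpa using this
  have hlim := hprod.div_const (Nat.factorial n₁ : ℝ)
  refine Filter.Tendsto.congr' ?_ hlim
  filter_upwards [Filter.eventually_ge_atTop 1] with n₂ hn₂
  have hn0 : (n₂:ℝ) ≠ 0 := by
    have : (0:ℕ) < n₂ := hn₂
    positivity
  have hid : ((n₁+n₂).choose n₁ : ℝ) * (Nat.factorial n₁ : ℝ)
      = ∏ i ∈ Finset.range n₁, ((n₁ + n₂ - i : ℕ) : ℝ) := by
    rw [← Nat.cast_mul, ← Nat.cast_prod]
    congr 1
    rw [← Nat.descFactorial_eq_prod_range]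
    rw [Nat.descFactorial_eq_factorial_mul_choose]
    ring
  rw [Finset.prod_div_distrib, Finset.prod_const, Finset.card_range, ← hid]
  field_simp

/-- Negative-binomial limit of the sampling probability under strong negative
selection proportional to sample size (eq. (9a)): with `β = β̃·n₂`, `β̃ < 0`, and
`q(n₁,n₂;β) = C(n₁+n₂,n₁)·I(n₁,n₂,β)/I(0,0,β)` where
`I(m₁,m₂,β) = ∫₀¹ x^{θ₁+m₁-1}(1-x)^{θ₂+m₂-1}e^{βx} dx`,
one has
`lim_{n₂→∞} q(n₁,n₂;β̃n₂)
  = (Γ(θ₁+n₁)/(n₁!Γ(θ₁)))·(1/(1+|β̃|))^{n₁}·(|β̃|/(1+|β̃|))^{θ₁}`. -/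
theorem sampling_prob_negative_binomial_limit (θ₁ θ₂ βt : ℝ)
    (hθ₁ : 0 < θ₁) (hθ₂ : 0 < θ₂) (hβ : βt < 0) (n₁ : ℕ) :
    Filter.Tendsto (fun n₂ : ℕ =>
        (Nat.choose (n₁ + n₂) n₁ : ℝ) *
          (∫ x in (0:ℝ)..1,
            x ^ (θ₁ + n₁ - 1) * (1 - x) ^ (θ₂ + n₂ - 1) * Real.exp (βt * n₂ * x)) /
          (∫ x in (0:ℝ)..1, x ^ (θ₁ - 1) * (1 - x) ^ (θ₂ - 1) * Real.exp (βt * n₂ * x)))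
      Filter.atTop
      (𝓝 ((Real.Gamma (θ₁ + n₁) / ((Nat.factorial n₁ : ℝ) * Real.Gamma θ₁)) *
        (1 / (1 + |βt|)) ^ n₁ * (|βt| / (1 + |βt|)) ^ θ₁)) := by
  have hc : (0:ℝ) < -βt := neg_pos.2 hβ
  have h1c : (0:ℝ) < 1 - βt := by linarith
  have hs : (0:ℝ) < θ₁ + (n₁:ℝ) := by positivity
  have hA := limA (θ₁ + (n₁:ℝ)) θ₂ βt hs hθ₂ hβ
  have hB := limB θ₁ θ₂ βt hθ₁ hθ₂ hβ
  have hC := limC n₁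
  have hΓθ₁ : (0:ℝ) < Real.Gamma θ₁ := Real.Gamma_pos_of_pos hθ₁
  have hBne : (1/(-βt)) ^ θ₁ * Real.Gamma θ₁ ≠ 0 :=
    (mul_pos (Real.rpow_pos_of_pos (by positivity) _) hΓθ₁).ne'
  have hfinal := (hC.mul hA).div hB hBne
  have hfacpos : (0:ℝ) < (Nat.factorial n₁ : ℝ) := by exact_mod_cast Nat.factorial_pos n₁
  have hL : 1 / (Nat.factorial n₁ : ℝ) *
        ((1/(1-βt)) ^ (θ₁ + (n₁:ℝ)) * Real.Gamma (θ₁ + (n₁:ℝ))) /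
        ((1/(-βt)) ^ θ₁ * Real.Gamma θ₁)
      = (Real.Gamma (θ₁ + n₁) / ((Nat.factorial n₁ : ℝ) * Real.Gamma θ₁)) *
        (1 / (1 + |βt|)) ^ n₁ * (|βt| / (1 + |βt|)) ^ θ₁ := by
    rw [abs_of_neg hβ, show (1:ℝ) + -βt = 1 - βt by ring]
    have e1 : (1/(1-βt)) ^ (θ₁ + (n₁:ℝ))
        = (1/(1-βt)) ^ θ₁ * (1/(1-βt)) ^ (n₁:ℕ) := by
      rw [Real.rpow_add (by positivity), Real.rpow_natCast]
    have e2 : ((-βt)/(1-βt)) ^ θ₁ = (1/(1-βt)) ^ θ₁ / (1/(-βt)) ^ θ₁ := by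
      rw [← Real.div_rpow (by positivity) (by positivity)]
      congr 1
      field_simp
    rw [e1, e2]
    have hne1 : ((1:ℝ)/(-βt)) ^ θ₁ ≠ 0 := (Real.rpow_pos_of_pos (by positivity) _).ne'
    field_simp
  rw [hL] at hfinal
  refine Filter.Tendsto.congr' ?_ hfinal
  filter_upwards [Filter.eventually_ge_atTop 1] with n hn
  have hn0 : (0:ℝ) < (n:ℝ) := by exact_mod_cast hn
  have hq : (n:ℝ) ^ (θ₁ + (n₁:ℝ)) = (n:ℝ) ^ θ₁ * (n:ℝ) ^ (n₁:ℕ) := by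
    rw [Real.rpow_add hn0, Real.rpow_natCast]
  have hpn : ((n:ℝ) ^ (n₁:ℕ)) ≠ 0 := pow_ne_zero _ hn0.ne'
  have hpθ : (n:ℝ) ^ θ₁ ≠ 0 := (Real.rpow_pos_of_pos hn0 _).ne'
  simp only [Pi.div_apply]
  rw [hq]
  set A := ∫ x in (0:ℝ)..1,
    x ^ (θ₁ + (n₁:ℝ) - 1) * (1 - x) ^ (θ₂ + (n:ℝ) - 1) * Real.exp (βt * n * x) with hAdef
  set B := ∫ x in (0:ℝ)..1, x ^ (θ₁ - 1) * (1 - x) ^ (θ₂ - 1) * Real.exp (βt * n * x) with hBdef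
  have hnum : ((Nat.choose (n₁ + n) n₁ : ℝ) / (n:ℝ) ^ (n₁:ℕ)) * (((n:ℝ) ^ θ₁ * (n:ℝ) ^ (n₁:ℕ)) * A)
      = (n:ℝ) ^ θ₁ * ((Nat.choose (n₁ + n) n₁ : ℝ) * A) := by
    field_simp
  rw [hnum, mul_div_mul_left _ _ hpθ]
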